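/- arXiv:2110.07247 — 4 statements merged into one kernel-verified Lean document; each statement's English description precedes it below -/
import Mathlib

section
/- The power series Σ_{n≥0} (C(2n,n)/4ⁿ) · x^(2n+1)/(2n+1) (the Maclaurin series of arcsin) converges for every x with |x| ≤ 1. -/
lemma central_binom_bound : ∀ n : ℕ,
    ((2 * n).choose n : ℝ) / 4 ^ n ≤ 1 / Real.sqrt (2 * n + 1) := by
  intro n
  induction n with
  | zero => simp
  | succ n ih =>
    have key : ((n : ℝ) + 1) * ((2 * (n + 1)).choose (n + 1)) =
        2 * (2 * n + 1) * ((2 * n).choose n) := by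
      have := Nat.succ_mul_centralBinom_succ n
      simp only [Nat.centralBinom] at this
      exact_mod_cast this
    have hn1 : (0:ℝ) < (n:ℝ) + 1 := by positivity
    have hc : ((2 * (n + 1)).choose (n + 1) : ℝ) =
        2 * (2 * n + 1) * ((2 * n).choose n) / ((n:ℝ) + 1) := by
      field_simp at key ⊢; linarith [key]
    have hsq1 : (0:ℝ) < Real.sqrt (2 * n + 1) := Real.sqrt_pos.mpr (by positivity)
    have hsq3 : (0:ℝ) < Real.sqrt (2 * (n+1) + 1) := Real.sqrt_pos.mpr (by positivity)
    have step : Real.sqrt (2 * n + 1) * Real.sqrt (2 * (n+1) + 1) ≤ 2 * n + 2 := by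
      rw [← Real.sqrt_mul (by positivity)]
      have : ((2*(n:ℝ)+1) * (2*(n+1)+1)) ≤ (2*n+2)^2 := by push_cast; ring_nf; nlinarith
      calc Real.sqrt ((2*(n:ℝ)+1) * (2*(n+1)+1)) ≤ Real.sqrt ((2*n+2)^2) :=
            Real.sqrt_le_sqrt this
        _ = 2*n+2 := Real.sqrt_sq (by positivity)
    -- rewrite the goal
    rw [hc]
    push_cast
    have h4 : (0:ℝ) < 4 ^ (n+1) := by positivity
    rw [div_le_div_iff₀ (by positivity) hsq3]
    have ih' : ((2 * n).choose n : ℝ) * Real.sqrt (2 * n + 1) ≤ 4 ^ n := by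
      rw [div_le_div_iff₀ (by positivity) hsq1] at ih
      linarith [ih]
    have hnn : (0:ℝ) ≤ ((2 * n).choose n : ℝ) := Nat.cast_nonneg _
    -- goal: 2*(2n+1)*c/(n+1) * sqrt(2n+3) ≤ 1 * 4^(n+1)
    rw [div_mul_eq_mul_div, div_le_iff₀ hn1, one_mul]
    have expand : (4:ℝ) ^ (n+1) * ((n:ℝ)+1) = 2 * (2*n+2) * 4^n := by
      push_cast; ring
    rw [expand]
    have hms : Real.sqrt (2*(n:ℝ)+1) * Real.sqrt (2*(n:ℝ)+1) = 2*(n:ℝ)+1 :=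
      Real.mul_self_sqrt (by positivity)
    calc 2 * (2*(n:ℝ)+1) * ((2 * n).choose n) * Real.sqrt (2 * ((n:ℝ)+1) + 1)
        = 2 * ((((2 * n).choose n : ℝ) * Real.sqrt (2*(n:ℝ)+1)) *
            (Real.sqrt (2*(n:ℝ)+1) * Real.sqrt (2 * ((n:ℝ)+1) + 1))) := by
          linear_combination (-2 * (((2*n).choose n : ℝ)) * Real.sqrt (2*((n:ℝ)+1)+1)) * hms
      _ ≤ 2 * (4^n * (2*(n:ℝ)+2)) := by
          have hmul := mul_le_mul ih' step (by positivity) (by positivity)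
          linarith
      _ = 2 * (2*(n:ℝ)+2) * 4^n := by ring

theorem arcsin_series_summable :
    ∀ x : ℝ, |x| ≤ 1 →
      Summable (fun n : ℕ =>
        ((Nat.choose (2 * n) n : ℝ) / 4 ^ n) * x ^ (2 * n + 1) / (2 * n + 1)) := by
  intro x hx
  have hg : Summable (fun n : ℕ => ((n : ℝ) + 1) ^ (-(3/2 : ℝ))) := by
    have := (Real.summable_nat_rpow (p := -(3/2))).mpr (by norm_num)
    have h := (summable_nat_add_iff 1).mpr this
    simpa using h
  apply Summable.of_abs
  apply Summable.of_nonneg_of_le (fun n => abs_nonneg _) _ hg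
  intro n
  have h1 : Real.sqrt (2 * n + 1) > 0 := Real.sqrt_pos.mpr (by positivity)
  have h2 : (0:ℝ) < 2 * n + 1 := by positivity
  have hb := central_binom_bound n
  have hxpow : |x| ^ (2 * n + 1) ≤ 1 := pow_le_one₀ (abs_nonneg x) hx
  have habs : |((Nat.choose (2 * n) n : ℝ) / 4 ^ n) * x ^ (2 * n + 1) / (2 * n + 1)|
      = ((Nat.choose (2 * n) n : ℝ) / 4 ^ n) * |x| ^ (2 * n + 1) / (2 * n + 1) := by
    rw [abs_div, abs_mul, abs_pow, abs_of_nonneg (by positivity : (0:ℝ) ≤ ((2*n).choose n : ℝ) / 4 ^ n),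
      abs_of_pos h2]
  rw [habs]
  have step1 : ((Nat.choose (2 * n) n : ℝ) / 4 ^ n) * |x| ^ (2 * n + 1) / (2 * n + 1)
      ≤ 1 / (Real.sqrt (2 * n + 1) * (2 * n + 1)) := by
    have : ((Nat.choose (2 * n) n : ℝ) / 4 ^ n) * |x| ^ (2 * n + 1)
        ≤ 1 / Real.sqrt (2 * n + 1) := by
      calc ((Nat.choose (2 * n) n : ℝ) / 4 ^ n) * |x| ^ (2 * n + 1)
          ≤ ((Nat.choose (2 * n) n : ℝ) / 4 ^ n) * 1 :=
            mul_le_mul_of_nonneg_left hxpow (by positivity)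
        _ = ((Nat.choose (2 * n) n : ℝ) / 4 ^ n) := mul_one _
        _ ≤ 1 / Real.sqrt (2 * n + 1) := hb
    calc ((Nat.choose (2 * n) n : ℝ) / 4 ^ n) * |x| ^ (2 * n + 1) / (2 * n + 1)
        ≤ (1 / Real.sqrt (2 * n + 1)) / (2 * n + 1) := by
          exact (div_le_div_iff_of_pos_right h2).mpr this
        _ = 1 / (Real.sqrt (2 * n + 1) * (2 * n + 1)) := by
          rw [div_div]
  have step2 : 1 / (Real.sqrt (2 * n + 1) * (2 * n + 1)) ≤ ((n : ℝ) + 1) ^ (-(3/2 : ℝ)) := by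
    have hx1 : (0:ℝ) < (n:ℝ) + 1 := by positivity
    have hpow : ((n : ℝ) + 1) ^ ((3:ℝ)/2) = Real.sqrt ((n:ℝ) + 1) * ((n:ℝ) + 1) := by
      rw [show (3:ℝ)/2 = 1/2 + 1 by norm_num, Real.rpow_add hx1, Real.rpow_one,
        Real.sqrt_eq_rpow]
    have hrw : ((n : ℝ) + 1) ^ (-(3/2 : ℝ)) = 1 / (Real.sqrt ((n:ℝ) + 1) * ((n:ℝ) + 1)) := by
      rw [Real.rpow_neg hx1.le, hpow, one_div]
    rw [hrw]
    have hs : Real.sqrt ((n:ℝ) + 1) * ((n:ℝ) + 1) ≤ Real.sqrt (2 * n + 1) * (2 * n + 1) := by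
      have h' : ((n:ℝ) + 1) ≤ 2 * n + 1 := by push_cast; linarith
      exact mul_le_mul (Real.sqrt_le_sqrt h') h' (by positivity)
        (Real.sqrt_nonneg _)
    exact one_div_le_one_div_of_le (by positivity) hs
  linarith
end

section
/- For all x with |x| < 1, arcsin x = Σ_{n≥0} (C(2n,n)/4ⁿ) · x^(2n+1)/(2n+1). -/
open Set Metric Real

noncomputable def aC (n : ℕ) : ℝ := (Nat.choose (2 * n) n : ℝ) / 4 ^ n

lemma aC_nonneg (n : ℕ) : 0 ≤ aC n := div_nonneg (Nat.cast_nonneg _) (by positivity)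

lemma aC_le_one (n : ℕ) : aC n ≤ 1 := by
  rw [aC, div_le_one (by positivity)]
  calc ((2*n).choose n : ℝ) ≤ ((2*n+1).choose n : ℝ) := by
        exact_mod_cast Nat.choose_le_choose n (Nat.le_succ _)
    _ ≤ 4^n := by exact_mod_cast Nat.choose_middle_le_pow n

lemma aC_zero : aC 0 = 1 := by simp [aC]

lemma aC_rec (n : ℕ) : (2*(n:ℝ)+2) * aC (n+1) = (2*n+1) * aC n := by
  have h : ((n:ℝ)+1) * ((2*(n+1)).choose (n+1) : ℝ) = 2*(2*n+1) * ((2*n).choose n : ℝ) := by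
    exact_mod_cast congrArg (Nat.cast (R := ℝ)) (Nat.succ_mul_centralBinom_succ n)
  simp only [aC, pow_succ]
  have h4 : (4:ℝ)^n ≠ 0 := by positivity
  field_simp
  linear_combination 2 * h

lemma bound_h (n : ℕ) {y r : ℝ} (hy : |y| ≤ r) : ‖aC n * y ^ (2*n)‖ ≤ r ^ (2*n) := by
  have h0 : (0:ℝ) ≤ r := le_trans (abs_nonneg y) hy
  rw [norm_mul, norm_pow, Real.norm_eq_abs, Real.norm_eq_abs,
    abs_of_nonneg (aC_nonneg n)]
  calc aC n * |y| ^ (2*n) ≤ 1 * r ^ (2*n) := by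
        apply mul_le_mul (aC_le_one n) (pow_le_pow_left₀ (abs_nonneg y) hy _)
          (by positivity) zero_le_one
    _ = r ^ (2*n) := one_mul _

lemma summable_h {y : ℝ} (hy : |y| < 1) : Summable fun n => aC n * y ^ (2*n) := by
  apply Summable.of_norm_bounded (g := fun n => |y| ^ (2*n)) ?_ (fun n => bound_h n le_rfl)
  simp_rw [pow_mul]
  exact summable_geometric_of_lt_one (by positivity) (by nlinarith [abs_nonneg y])

lemma summable_hderiv {y : ℝ} (hy : |y| < 1) :
    Summable fun n => aC n * ((2*n) * y ^ (2*n-1)) := by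
  set r : ℝ := (|y| + 1)/2 with hrdef
  have h0 : 0 ≤ |y| := abs_nonneg y
  have hr0 : 0 < r := by rw [hrdef]; linarith
  have hyr : |y| ≤ r := by rw [hrdef]; linarith
  have hr1 : r < 1 := by rw [hrdef]; linarith
  have hu : Summable fun n : ℕ => (2/r) * ((n:ℝ)^1 * (r^2)^n) := by
    apply Summable.mul_left
    apply summable_pow_mul_geometric_of_norm_lt_one
    rw [Real.norm_eq_abs, abs_of_nonneg (by positivity)]
    nlinarith
  apply Summable.of_norm_bounded hu
  intro n
  rw [norm_mul, Real.norm_eq_abs, Real.norm_eq_abs, abs_of_nonneg (aC_nonneg n)]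
  have key : |(2*(n:ℝ)) * y ^ (2*n-1)| ≤ (2/r) * ((n:ℝ)^1 * (r^2)^n) := by
    rcases Nat.eq_zero_or_pos n with hn | hn
    · subst hn; simp
    · have h2n : 2*n - 1 + 1 = 2*n := by omega
      rw [abs_mul, abs_pow]
      have hb : |y| ^ (2*n-1) ≤ r ^ (2*n-1) := pow_le_pow_left₀ h0 hyr _
      have hrr : r ^ (2*n-1) = (r^2)^n / r := by
        rw [eq_div_iff (ne_of_gt hr0), ← pow_succ, h2n, ← pow_mul, mul_comm 2 n]
        -- fix
      calc |2*(n:ℝ)| * |y| ^ (2*n-1) ≤ (2*n) * r^(2*n-1) := by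
            apply mul_le_mul _ hb (by positivity) (by positivity)
            rw [abs_of_nonneg (by positivity)]
        _ = (2/r) * ((n:ℝ)^1 * (r^2)^n) := by rw [hrr]; field_simp
  calc aC n * |(2*(n:ℝ)) * y ^ (2*n-1)| ≤ 1 * |(2*(n:ℝ)) * y ^ (2*n-1)| :=
        mul_le_mul_of_nonneg_right (aC_le_one n) (abs_nonneg _)
    _ = |(2*(n:ℝ)) * y ^ (2*n-1)| := one_mul _
    _ ≤ _ := key

lemma mem_ball_abs {y r : ℝ} (h : y ∈ ball (0:ℝ) r) : |y| < r := by
  simpa [Real.dist_eq] using h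

lemma hasDerivAt_h {x : ℝ} (hx : |x| < 1) :
    HasDerivAt (fun y => ∑' n, aC n * y ^ (2*n))
      (∑' n, aC n * ((2*n) * x ^ (2*n-1))) x := by
  set r : ℝ := (|x| + 1)/2 with hrdef
  have h0 : 0 ≤ |x| := abs_nonneg x
  have hr0 : 0 < r := by rw [hrdef]; linarith
  have hxr : |x| < r := by rw [hrdef]; linarith
  have hr1 : r < 1 := by rw [hrdef]; linarith
  have hu : Summable fun n : ℕ => (2/r) * ((n:ℝ)^1 * (r^2)^n) := by
    apply Summable.mul_left
    apply summable_pow_mul_geometric_of_norm_lt_one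
    rw [Real.norm_eq_abs, abs_of_nonneg (by positivity)]
    nlinarith
  apply hasDerivAt_tsum_of_isPreconnected hu isOpen_ball
    ((convex_ball (0:ℝ) r).isPreconnected)
    (g' := fun n y => aC n * ((2*n) * y ^ (2*n-1)))
    (fun n y _ => by
      have := (hasDerivAt_pow (2*n) y).const_mul (aC n)
      push_cast at this; exact this)
    ?_ (mem_ball_self hr0) ?_ (by simpa [Real.dist_eq] using hxr)
  · intro n y hy
    have hyr : |y| ≤ r := (mem_ball_abs hy).le
    rw [norm_mul, Real.norm_eq_abs, Real.norm_eq_abs, abs_of_nonneg (aC_nonneg n)]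
    have key : |(2*(n:ℝ)) * y ^ (2*n-1)| ≤ (2/r) * ((n:ℝ)^1 * (r^2)^n) := by
      rcases Nat.eq_zero_or_pos n with hn | hn
      · subst hn; simp
      · have h2n : 2*n - 1 + 1 = 2*n := by omega
        rw [abs_mul, abs_pow]
        have hb : |y| ^ (2*n-1) ≤ r ^ (2*n-1) := pow_le_pow_left₀ (abs_nonneg y) hyr _
        have hrr : r ^ (2*n-1) = (r^2)^n / r := by
          rw [eq_div_iff (ne_of_gt hr0), ← pow_succ, h2n, ← pow_mul, mul_comm 2 n]
        calc |2*(n:ℝ)| * |y| ^ (2*n-1) ≤ (2*n) * r^(2*n-1) := by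
              apply mul_le_mul _ hb (by positivity) (by positivity)
              rw [abs_of_nonneg (by positivity)]
          _ = (2/r) * ((n:ℝ)^1 * (r^2)^n) := by rw [hrr]; field_simp
    calc aC n * |(2*(n:ℝ)) * y ^ (2*n-1)| ≤ 1 * |(2*(n:ℝ)) * y ^ (2*n-1)| :=
          mul_le_mul_of_nonneg_right (aC_le_one n) (abs_nonneg _)
      _ = |(2*(n:ℝ)) * y ^ (2*n-1)| := one_mul _
      _ ≤ _ := key
  · exact summable_h (by norm_num)

lemma hasDerivAt_term_g (n : ℕ) (y : ℝ) :
    HasDerivAt (fun z => aC n * z ^ (2*n+1) / (2*(n:ℝ)+1)) (aC n * y ^ (2*n)) y := by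
  have h1 := ((hasDerivAt_pow (2*n+1) y).const_mul (aC n)).div_const (2*(n:ℝ)+1)
  have hne : (2*(n:ℝ)+1) ≠ 0 := by positivity
  convert h1 using 1
  · rfl
  · rfl
  push_cast
  field_simp

lemma hasDerivAt_g {x : ℝ} (hx : |x| < 1) :
    HasDerivAt (fun y => ∑' n, aC n * y ^ (2*n+1) / (2*(n:ℝ)+1))
      (∑' n, aC n * x ^ (2*n)) x := by
  set r : ℝ := (|x| + 1)/2 with hrdef
  have h0 : 0 ≤ |x| := abs_nonneg x
  have hr0 : 0 < r := by rw [hrdef]; linarith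
  have hxr : |x| < r := by rw [hrdef]; linarith
  have hr1 : r < 1 := by rw [hrdef]; linarith
  have hu : Summable fun n : ℕ => r ^ (2*n) := by
    simp_rw [pow_mul]
    exact summable_geometric_of_lt_one (by positivity) (by nlinarith)
  apply hasDerivAt_tsum_of_isPreconnected hu isOpen_ball
    ((convex_ball (0:ℝ) r).isPreconnected)
    (g' := fun n y => aC n * y ^ (2*n))
    (fun n y _ => hasDerivAt_term_g n y)
    (fun n y hy => bound_h n (mem_ball_abs hy).le)
    (mem_ball_self hr0) ?_ (by simpa [Real.dist_eq] using hxr)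
  · apply summable_zero.congr
    intro n
    simp [zero_pow]

lemma key_ident {x : ℝ} (hx : |x| < 1) :
    (1 - x^2) * (∑' n, aC n * ((2*n) * x ^ (2*n-1))) = x * ∑' n, aC n * x ^ (2*n) := by
  set f := fun n : ℕ => aC n * ((2*(n:ℝ)) * x ^ (2*n-1)) with hfdef
  have hf : Summable f := summable_hderiv hx
  set D := ∑' n, f n with hDdef
  set H := ∑' n, aC n * x ^ (2*n) with hHdef
  have hD : HasSum f D := hf.hasSum
  have hH : HasSum (fun n => aC n * x ^ (2*n)) H := (summable_h hx).hasSum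
  have hD1 : HasSum (fun n => f (n+1)) D := by
    refine (hasSum_nat_add_iff 1).2 ?_
    simpa [hfdef] using hD
  have hfs : (fun n => f (n+1)) = fun n : ℕ => (2*(n:ℝ)+1) * aC n * x ^ (2*n+1) := by
    funext n
    have h1 : 2*(n+1) - 1 = 2*n+1 := by omega
    simp only [hfdef, h1]
    push_cast
    linear_combination x ^ (2*n+1) * aC_rec n
  rw [hfs] at hD1
  have hxH : HasSum (fun n : ℕ => aC n * x ^ (2*n+1)) (x * H) := by
    have h2 : (fun n : ℕ => x * (aC n * x ^ (2*n))) = fun n : ℕ => aC n * x ^ (2*n+1) := by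
      funext n; rw [pow_succ]; ring
    exact h2 ▸ hH.mul_left x
  set w := fun n : ℕ => (2*(n:ℝ)) * aC n * x ^ (2*n+1) with hwdef
  have hw : HasSum w (D - x * H) := by
    have h3 : (fun n : ℕ => (2*(n:ℝ)+1) * aC n * x ^ (2*n+1) - aC n * x ^ (2*n+1)) = w := by
      funext n; simp only [hwdef]; ring
    exact h3 ▸ hD1.sub hxH
  have hw1 : HasSum (fun n => w (n+1)) (D - x * H) := by
    refine (hasSum_nat_add_iff (f := w) 1).2 ?_
    simpa [hwdef] using hw
  have hx2 : HasSum (fun n => w (n+1)) (x^2 * D) := by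
    have h5 : (fun n : ℕ => x^2 * ((2*(n:ℝ)+1) * aC n * x ^ (2*n+1)))
        = fun n => w (n+1) := by
      funext n
      simp only [hwdef]
      have h2 : 2*(n+1)+1 = (2*n+1) + 2 := by omega
      rw [h2, pow_add]
      push_cast
      linear_combination (-(x ^ (2*n+1) * x^2)) * aC_rec n
    exact h5 ▸ hD1.mul_left (x^2)
  have h6 := hw1.unique hx2
  linear_combination h6

lemma const_on_Ioo {f : ℝ → ℝ} (hf : ∀ y ∈ Ioo (-1:ℝ) 1, HasDerivAt f 0 y)
    {x : ℝ} (hx : x ∈ Ioo (-1:ℝ) 1) : f x = f 0 := by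
  have h0 : (0:ℝ) ∈ Ioo (-1:ℝ) 1 := by norm_num
  refine (convex_Ioo (-1:ℝ) 1).is_const_of_fderivWithin_eq_zero
    (fun y hy => (hf y hy).differentiableAt.differentiableWithinAt) ?_ hx h0
  intro y hy
  rw [fderivWithin_of_isOpen isOpen_Ioo hy, (hf y hy).hasFDerivAt.fderiv]
  ext
  simp

lemma h_eq {x : ℝ} (hx : x ∈ Ioo (-1:ℝ) 1) :
    (∑' n, aC n * x ^ (2*n)) = (Real.sqrt (1 - x^2))⁻¹ := by
  have habs : ∀ y : ℝ, y ∈ Ioo (-1:ℝ) 1 → |y| < 1 := fun y hy => abs_lt.2 ⟨hy.1, hy.2⟩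
  set φ := fun y : ℝ => (∑' n, aC n * y ^ (2*n)) * Real.sqrt (1 - y^2) with hφdef
  have hφ : ∀ y ∈ Ioo (-1:ℝ) 1, HasDerivAt φ 0 y := by
    intro y hy
    have hy1 : 0 < 1 - y^2 := by nlinarith [habs y hy, abs_nonneg y, sq_abs y,
      (abs_lt.1 (habs y hy)).1, (abs_lt.1 (habs y hy)).2]
    have hs0 : 0 < Real.sqrt (1 - y^2) := Real.sqrt_pos.2 hy1
    have hinner : HasDerivAt (fun z : ℝ => 1 - z^2) (-((2:ℕ) * y ^ (2-1))) y :=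
      (hasDerivAt_pow 2 y).const_sub 1
    have hsq : HasDerivAt (fun z : ℝ => Real.sqrt (1 - z^2))
        (1 / (2 * Real.sqrt (1 - y^2)) * (-((2:ℕ) * y ^ (2-1)))) y :=
      (Real.hasDerivAt_sqrt (ne_of_gt hy1)).comp y hinner
    have hd := hasDerivAt_h (habs y hy)
    have hmul := hd.mul hsq
    convert hmul using 1
    · rfl
    · rfl
    · rfl
    have hkey := key_ident (habs y hy)
    have hs2 : Real.sqrt (1 - y^2) ^ 2 = 1 - y^2 := Real.sq_sqrt hy1.le
    set D := ∑' n, aC n * ((2*n) * y ^ (2*n-1))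
    set H := ∑' n, aC n * y ^ (2*n)
    have hsne : Real.sqrt (1 - y^2) ≠ 0 := ne_of_gt hs0
    push_cast
    field_simp
    linear_combination -D*hs2 - hkey
  have hc := const_on_Ioo hφ hx
  have hφ0 : φ 0 = 1 := by
    have : (∑' n, aC n * (0:ℝ) ^ (2*n)) = 1 := by
      rw [tsum_eq_single 0]
      · simp [aC_zero]
      · intro n hn
        have : 2*n ≠ 0 := by omega
        simp [zero_pow this]
    simp [hφdef, this]
  have hs0 : 0 < Real.sqrt (1 - x^2) := Real.sqrt_pos.2 (by nlinarith [abs_lt.1 (habs x hx)])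
  have hone : (∑' n, aC n * x ^ (2*n)) * Real.sqrt (1 - x^2) = 1 := hc.trans hφ0
  field_simp
  linarith [hone]

theorem arcsin_eq_series :
    ∀ x : ℝ, |x| < 1 →
      Real.arcsin x =
        ∑' n : ℕ, ((Nat.choose (2 * n) n : ℝ) / 4 ^ n) * x ^ (2 * n + 1) / (2 * n + 1) := by
  intro x hx
  have hxI : x ∈ Ioo (-1:ℝ) 1 := ⟨(abs_lt.1 hx).1, (abs_lt.1 hx).2⟩
  set ψ := fun y : ℝ => (∑' n, aC n * y ^ (2*n+1) / (2*(n:ℝ)+1)) - Real.arcsin y with hψdef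
  have hψ : ∀ y ∈ Ioo (-1:ℝ) 1, HasDerivAt ψ 0 y := by
    intro y hy
    have hy1 : |y| < 1 := abs_lt.2 ⟨hy.1, hy.2⟩
    have hy1' : 0 < 1 - y^2 := by nlinarith [abs_lt.1 hy1]
    have harc := Real.hasDerivAt_arcsin (ne_of_gt hy.1) (ne_of_lt hy.2)
    have hg := hasDerivAt_g hy1
    have := hg.sub harc
    convert this using 1
    · rfl
    · rfl
    · rfl
    rw [h_eq hy, one_div, sub_self]
  have hc := const_on_Ioo hψ hxI
  have hψ0 : ψ 0 = 0 := by
    have hz : (∑' n : ℕ, aC n * (0:ℝ) ^ (2*n+1) / (2*(n:ℝ)+1)) = 0 := by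
      have : (fun n : ℕ => aC n * (0:ℝ) ^ (2*n+1) / (2*(n:ℝ)+1)) = fun _ => (0:ℝ) := by
        funext n; simp [zero_pow]
      rw [this, tsum_zero]
    simp [hψdef, hz, Real.arcsin_zero]
  have := hc.trans hψ0
  have h7 : (∑' n, aC n * x ^ (2*n+1) / (2*(n:ℝ)+1)) = Real.arcsin x := by
    have := sub_eq_zero.1 this
    linarith [this]
  rw [← h7]
  apply tsum_congr
  intro n
  simp [aC]
end

section
/- The series Σ_{n≥0} (C(2n,n)/4ⁿ) · 1/(2n+1) converges and equals π/2. -/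
open Real MeasureTheory


noncomputable def cc (n : ℕ) : ℝ := (Nat.choose (2 * n) n : ℝ) / 4 ^ n

lemma cc_zero : cc 0 = 1 := by simp [cc]

lemma cc_nonneg (n : ℕ) : 0 ≤ cc n :=
  div_nonneg (Nat.cast_nonneg _) (by positivity)

lemma cc_succ (n : ℕ) : cc (n + 1) = cc n * ((2 * n + 1) / (2 * n + 2)) := by
  have h := Nat.succ_mul_centralBinom_succ n
  have h' : ((n:ℝ) + 1) * (Nat.choose (2 * (n+1)) (n+1) : ℝ)
      = 2 * (2 * (n:ℝ) + 1) * (Nat.choose (2 * n) n : ℝ) := by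
    have := congrArg (Nat.cast : ℕ → ℝ) h
    simp only [Nat.centralBinom] at this
    push_cast at this
    convert this using 2 <;> ring
  have hp : (0:ℝ) < 4 ^ n := by positivity
  rw [cc, cc]
  rw [pow_succ]
  field_simp
  nlinarith [h']

lemma cc_le_one (n : ℕ) : cc n ≤ 1 := by
  rw [cc, div_le_one (by positivity)]
  have h1 : (2 * n).choose n ≤ (2 * n + 1).choose n := Nat.choose_mono n (by omega)
  have h2 := Nat.choose_middle_le_pow n
  exact_mod_cast h1.trans h2

lemma abs_cc_le_one (n : ℕ) : |cc n| ≤ 1 := by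
  rw [abs_of_nonneg (cc_nonneg n)]; exact cc_le_one n

lemma summable_n_mul_pow {r : ℝ} (hr0 : 0 ≤ r) (hr : r < 1) :
    Summable (fun n : ℕ => (n : ℝ) * r ^ n) := by
  have := summable_pow_mul_geometric_of_norm_lt_one (R := ℝ) 1
    (r := r) (by rwa [Real.norm_eq_abs, abs_of_nonneg hr0])
  simpa using this

lemma summable_cc_pow {y : ℝ} (hy : |y| < 1) : Summable (fun n => cc n * y ^ n) := by
  apply Summable.of_norm_bounded (summable_geometric_of_lt_one (abs_nonneg y) hy)
  intro n
  rw [norm_mul, norm_pow, Real.norm_eq_abs, Real.norm_eq_abs]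
  calc |cc n| * |y| ^ n ≤ 1 * |y| ^ n :=
        mul_le_mul_of_nonneg_right (abs_cc_le_one n) (by positivity)
    _ = |y| ^ n := one_mul _

lemma key_identity {t : ℝ} (ht0 : 0 ≤ t) (ht1 : t < 1) :
    (∑' n, cc n * t ^ n) * Real.sqrt (1 - t) = 1 := by
  set r : ℝ := (t + 1) / 2 with hrdef
  have hr0 : (0:ℝ) < r := by simp only [hrdef]; linarith
  have hrt : t < r := by simp only [hrdef]; linarith
  have hr1 : r < 1 := by simp only [hrdef]; linarith
  set s : Set ℝ := Set.Ioo (-r) r with hsdef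
  have hs : IsOpen s := isOpen_Ioo
  have hsc : IsPreconnected s := isPreconnected_Ioo
  set u : ℕ → ℝ := fun n => (1 / r) * ((n:ℝ) * r ^ n) with hudef
  have hu : Summable u := (summable_n_mul_pow hr0.le hr1).mul_left _
  set g : ℕ → ℝ → ℝ := fun n y => cc n * y ^ n with hgdef
  set g' : ℕ → ℝ → ℝ := fun n y => cc n * ((n:ℝ) * y ^ (n - 1)) with hg'def
  have hg : ∀ (n : ℕ) (y : ℝ), y ∈ s → HasDerivAt (g n) (g' n y) y := fun n y _ =>
    (hasDerivAt_pow n y).const_mul (cc n)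
  have habs : ∀ y ∈ s, |y| < r := fun y hy => abs_lt.2 ⟨hy.1, hy.2⟩
  have hg' : ∀ (n : ℕ) (y : ℝ), y ∈ s → ‖g' n y‖ ≤ u n := by
    intro n y hy
    rcases Nat.eq_zero_or_pos n with h | h
    · subst h; simp [hg'def, hudef]
    · have hyr : |y| ≤ r := (habs y hy).le
      have h1 : ‖g' n y‖ = |cc n| * ((n:ℝ) * |y| ^ (n - 1)) := by
        simp [hg'def, abs_mul, abs_pow, Nat.abs_cast]
      rw [h1]
      have h2 : |y| ^ (n-1) ≤ r ^ (n-1) := pow_le_pow_left₀ (abs_nonneg y) hyr _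
      have h3 : (1 / r) * ((n:ℝ) * r ^ n) = (n:ℝ) * r ^ (n-1) := by
        have : r ^ n = r ^ (n-1) * r := by
          rw [← pow_succ]; congr 1; omega
        rw [this]; field_simp
      rw [hudef]; simp only []
      rw [h3]
      calc |cc n| * ((n:ℝ) * |y| ^ (n - 1)) ≤ 1 * ((n:ℝ) * r ^ (n-1)) := by
            apply mul_le_mul (abs_cc_le_one n) _ (by positivity) zero_le_one
            exact mul_le_mul_of_nonneg_left h2 (Nat.cast_nonneg n)
        _ = (n:ℝ) * r ^ (n-1) := one_mul _
  have h0s : (0:ℝ) ∈ s := ⟨by linarith, hr0⟩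
  have hg0 : Summable fun n => g n 0 := summable_cc_pow (by simp)
  set F : ℝ → ℝ := fun z => ∑' n, g n z with hFdef
  have hF : ∀ y ∈ s, HasDerivAt F (∑' n, g' n y) y := fun y hy =>
    hasDerivAt_tsum_of_isPreconnected hu hs hsc hg hg' h0s hg0 hy
  -- the ODE : (1 - y) * D = F y / 2
  have hODE : ∀ y ∈ s, (1 - y) * (∑' n, g' n y) = F y / 2 := by
    intro y hy
    have hy1 : |y| < 1 := lt_trans (habs y hy) hr1
    have hS1 : Summable (fun n => cc n * y ^ n) := summable_cc_pow hy1
    have hS2 : Summable (fun n => g' n y) :=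
      Summable.of_norm_bounded hu (fun n => hg' n y hy)
    have hS3 : Summable (fun n => cc n * ((n:ℝ) * y ^ n)) := by
      apply Summable.of_norm_bounded (hu.mul_left r)
      intro n
      have : r * u n = (n:ℝ) * r ^ n := by
        rw [hudef]; field_simp
      rw [this]
      rcases Nat.eq_zero_or_pos n with h | h
      · subst h; simp
      · have : ‖cc n * ((n:ℝ) * y ^ n)‖ = |cc n| * ((n:ℝ) * |y| ^ n) := by
          simp [abs_mul, abs_pow, Nat.abs_cast]
        rw [this]
        calc |cc n| * ((n:ℝ) * |y| ^ n) ≤ 1 * ((n:ℝ) * r ^ n) := by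
              apply mul_le_mul (abs_cc_le_one n) _ (by positivity) zero_le_one
              exact mul_le_mul_of_nonneg_left
                (pow_le_pow_left₀ (abs_nonneg y) (habs y hy).le n) (Nat.cast_nonneg n)
          _ = (n:ℝ) * r ^ n := one_mul _
    have hshift : (∑' n, g' n y) = ∑' n, g' (n+1) y := by
      rw [Summable.tsum_eq_zero_add hS2]
      simp [hg'def]
    have hterm : ∀ n : ℕ, g' (n+1) y = cc n * ((n:ℝ) * y ^ n) + (1/2) * (cc n * y ^ n) := by
      intro n
      simp only [hg'def, Nat.add_sub_cancel]
      rw [cc_succ n]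
      have h2n : (2*(n:ℝ)+2) ≠ 0 := by positivity
      field_simp
      push_cast
      ring
    have hsplit : (∑' n, g' (n+1) y)
        = (∑' n, cc n * ((n:ℝ) * y ^ n)) + (1/2) * F y := by
      simp_rw [hterm]
      rw [Summable.tsum_add hS3 (hS1.mul_left (1/2)), tsum_mul_left]
    have hyD : (∑' n, cc n * ((n:ℝ) * y ^ n)) = y * (∑' n, g' n y) := by
      rw [← tsum_mul_left]
      congr 1
      funext n
      rcases Nat.eq_zero_or_pos n with h | h
      · subst h; simp [hg'def]
      · simp only [hg'def]
        have : y ^ n = y * y ^ (n-1) := by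
          rw [← pow_succ']; congr 1; omega
        rw [this]; ring
    have := hshift.trans (hsplit.trans (by rw [hyD]))
    linarith [this]
  set H : ℝ → ℝ := fun y => F y * Real.sqrt (1 - y) with hHdef
  have hH0 : ∀ y ∈ s, HasDerivAt H 0 y := by
    intro y hy
    have hy1 : (0:ℝ) < 1 - y := by have := hy.2; simp only [hsdef] at *; linarith [hr1]
    have hsq : HasDerivAt (fun z : ℝ => Real.sqrt (1 - z)) (1 / (2 * Real.sqrt (1-y)) * (-1)) y := by
      have inner : HasDerivAt (fun z : ℝ => 1 - z) (-1) y := by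
        simpa using (hasDerivAt_id y).const_sub 1
      exact (Real.hasDerivAt_sqrt hy1.ne').comp y inner
    have hmul := (hF y hy).mul hsq
    have hzero : (∑' n, g' n y) * Real.sqrt (1-y) + F y * (1 / (2 * Real.sqrt (1-y)) * (-1)) = 0 := by
      have hs0 : (0:ℝ) < Real.sqrt (1-y) := Real.sqrt_pos.2 hy1
      have hsq2 : Real.sqrt (1-y) * Real.sqrt (1-y) = 1 - y := Real.mul_self_sqrt hy1.le
      have hO := hODE y hy
      have key : (∑' n, g' n y) * Real.sqrt (1-y) = F y / (2 * Real.sqrt (1-y)) := by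
        rw [eq_div_iff (by positivity)]
        calc (∑' n, g' n y) * Real.sqrt (1-y) * (2 * Real.sqrt (1-y))
            = 2 * ((1 - y) * (∑' n, g' n y)) := by
              linear_combination (2 * (∑' n, g' n y)) * hsq2
          _ = F y := by rw [hO]; ring
      rw [key]
      field_simp
      ring
    rw [← hzero]
    exact hmul
  have hts : t ∈ s := ⟨by linarith, hrt⟩
  have hIcc : Set.Icc (0:ℝ) t ⊆ s := fun x hx => ⟨by linarith [hx.1], lt_of_le_of_lt hx.2 hrt⟩
  have hconst : H t = H 0 := by
    apply constant_of_has_deriv_right_zero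
      (fun x hx => ((hH0 x (hIcc hx)).continuousAt).continuousWithinAt)
      (fun x hx => (hH0 x (hIcc (Set.mem_Icc.2 ⟨hx.1, hx.2.le⟩))).hasDerivWithinAt)
    exact Set.mem_Icc.2 ⟨ht0, le_refl t⟩
  have hF0 : F 0 = 1 := by
    rw [hFdef]
    simp only []
    rw [tsum_eq_single 0 (by intro n hn; simp [hgdef, zero_pow hn])]
    simp [hgdef, cc_zero]
  have : H 0 = 1 := by rw [hHdef]; simp [hF0]
  calc (∑' n, cc n * t ^ n) * Real.sqrt (1 - t) = H t := rfl
    _ = 1 := hconst.trans this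
lemma sin_pow_integral (n : ℕ) :
    ∫ θ in (0:ℝ)..(π/2), Real.sin θ ^ (2*n) * Real.cos θ = 1/(2*(n:ℝ)+1) := by
  have hderiv : ∀ θ ∈ Set.uIcc (0:ℝ) (π/2),
      HasDerivAt (fun x => Real.sin x ^ (2*n+1) / (2*(n:ℝ)+1))
        (Real.sin θ ^ (2*n) * Real.cos θ) θ := by
    intro θ _
    have h := ((Real.hasDerivAt_sin θ).pow (2*n+1)).div_const (2*(n:ℝ)+1)
    convert h using 1
    · rfl
    · rfl
    · rfl
    have h1 : (2*n+1) - 1 = 2*n := by omega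
    rw [h1]
    have h2 : (0:ℝ) < 2*(n:ℝ)+1 := by positivity
    push_cast
    field_simp
  have hint : IntervalIntegrable (fun θ => Real.sin θ ^ (2*n) * Real.cos θ)
      volume 0 (π/2) := (Continuous.mul (by continuity) Real.continuous_cos).intervalIntegrable _ _
  rw [intervalIntegral.integral_eq_sub_of_hasDerivAt hderiv hint]
  simp [Real.sin_pi_div_two]

lemma a_eq (n : ℕ) : cc n / (2*(n:ℝ)+1)
    = ∫ θ in (0:ℝ)..(π/2), cc n * (Real.sin θ ^ (2*n) * Real.cos θ) := by
  rw [intervalIntegral.integral_const_mul, sin_pow_integral]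
  ring

lemma sin_sq_lt_one {θ : ℝ} (h0 : 0 ≤ θ) (h1 : θ < π/2) :
    Real.sin θ ^ 2 < 1 := by
  have hs1 : Real.sin θ < 1 := by
    calc Real.sin θ < Real.sin (π/2) := by
          apply Real.strictMonoOn_sin ⟨by linarith, by linarith [Real.pi_pos]⟩
            ⟨by linarith [Real.pi_pos], le_refl _⟩ h1
      _ = 1 := Real.sin_pi_div_two
  have hs0 : 0 ≤ Real.sin θ := Real.sin_nonneg_of_nonneg_of_le_pi h0 (by linarith [Real.pi_pos])
  nlinarith

lemma tsum_eq_one {θ : ℝ} (h0 : 0 < θ) (h1 : θ < π/2) :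
    (∑' n, cc n * (Real.sin θ ^ (2*n) * Real.cos θ)) = 1 := by
  have hss := sin_sq_lt_one h0.le h1
  have hcos : 0 < Real.cos θ := Real.cos_pos_of_mem_Ioo ⟨by linarith [Real.pi_pos], h1⟩
  have hsqrt : Real.sqrt (1 - Real.sin θ ^ 2) = Real.cos θ := by
    rw [show (1 : ℝ) - Real.sin θ ^ 2 = Real.cos θ ^ 2 by
      have := Real.sin_sq_add_cos_sq θ; linarith]
    exact Real.sqrt_sq hcos.le
  have hterm : ∀ n : ℕ, cc n * (Real.sin θ ^ (2*n) * Real.cos θ)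
      = (cc n * (Real.sin θ ^ 2) ^ n) * Real.cos θ := by
    intro n; rw [pow_mul]; ring
  simp_rw [hterm]
  rw [tsum_mul_right]
  have := key_identity (t := Real.sin θ ^ 2) (by positivity) hss
  rwa [hsqrt] at this

lemma partial_le_one {θ : ℝ} (hθ : θ ∈ Set.Icc (0:ℝ) (π/2)) (N : ℕ) :
    ∑ n ∈ Finset.range N, cc n * (Real.sin θ ^ (2*n) * Real.cos θ) ≤ 1 := by
  obtain ⟨h0, h1⟩ := hθ
  have hcos0 : 0 ≤ Real.cos θ :=
    Real.cos_nonneg_of_mem_Icc ⟨by linarith [Real.pi_pos], h1⟩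
  have hterm : ∀ n : ℕ, cc n * (Real.sin θ ^ (2*n) * Real.cos θ)
      = (cc n * (Real.sin θ ^ 2) ^ n) * Real.cos θ := by
    intro n; rw [pow_mul]; ring
  simp_rw [hterm, ← Finset.sum_mul]
  rcases eq_or_lt_of_le h1 with heq | hlt
  · have : Real.cos θ = 0 := by rw [heq, Real.cos_pi_div_two]
    simp [this]
  · have hss := sin_sq_lt_one h0 hlt
    have habs : |Real.sin θ ^ 2| < 1 := by
      rw [abs_of_nonneg (by positivity)]; exact hss
    have hsummable := summable_cc_pow habs
    have hpart : ∑ n ∈ Finset.range N, cc n * (Real.sin θ ^ 2) ^ n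
        ≤ ∑' n, cc n * (Real.sin θ ^ 2) ^ n :=
      Summable.sum_le_tsum _ (fun n _ => mul_nonneg (cc_nonneg n) (by positivity)) hsummable
    have hsqrt : Real.sqrt (1 - Real.sin θ ^ 2) = Real.cos θ := by
      rw [show (1 : ℝ) - Real.sin θ ^ 2 = Real.cos θ ^ 2 by
        have := Real.sin_sq_add_cos_sq θ; linarith]
      exact Real.sqrt_sq hcos0
    have hkey := key_identity (t := Real.sin θ ^ 2) (by positivity) hss
    rw [hsqrt] at hkey
    calc (∑ n ∈ Finset.range N, cc n * (Real.sin θ ^ 2) ^ n) * Real.cos θ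
        ≤ (∑' n, cc n * (Real.sin θ ^ 2) ^ n) * Real.cos θ :=
          mul_le_mul_of_nonneg_right hpart hcos0
      _ = 1 := hkey

lemma integrand_cont (n : ℕ) :
    Continuous (fun θ : ℝ => cc n * (Real.sin θ ^ (2*n) * Real.cos θ)) := by
  continuity

lemma partial_sum_le (N : ℕ) :
    ∑ n ∈ Finset.range N, cc n / (2*(n:ℝ)+1) ≤ π / 2 := by
  have h1 : ∑ n ∈ Finset.range N, cc n / (2*(n:ℝ)+1)
      = ∫ θ in (0:ℝ)..(π/2), ∑ n ∈ Finset.range N,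
          cc n * (Real.sin θ ^ (2*n) * Real.cos θ) := by
    rw [intervalIntegral.integral_finset_sum]
    · exact Finset.sum_congr rfl fun n _ => a_eq n
    · exact fun n _ => (integrand_cont n).intervalIntegrable _ _
  rw [h1]
  have hpi : (0:ℝ) ≤ π/2 := by linarith [Real.pi_pos]
  calc (∫ θ in (0:ℝ)..(π/2), ∑ n ∈ Finset.range N,
          cc n * (Real.sin θ ^ (2*n) * Real.cos θ))
      ≤ ∫ _ in (0:ℝ)..(π/2), (1:ℝ) := by
        apply intervalIntegral.integral_mono_on hpi
        · exact (continuous_finset_sum _ fun n _ => integrand_cont n).intervalIntegrable _ _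
        · exact intervalIntegrable_const
        · exact fun θ hθ => partial_le_one hθ N
    _ = π/2 := by simp

lemma summable_a : Summable (fun n : ℕ => cc n / (2*(n:ℝ)+1)) :=
  summable_of_sum_range_le (fun n => div_nonneg (cc_nonneg n) (by positivity)) partial_sum_le

lemma tsum_a : ∑' n : ℕ, cc n / (2*(n:ℝ)+1) = π/2 := by
  set f : ℕ → ℝ → ℝ := fun n θ => cc n * (Real.sin θ ^ (2*n) * Real.cos θ) with hfdef
  have hpi : (0:ℝ) ≤ π/2 := by linarith [Real.pi_pos]
  set μ := volume.restrict (Set.Ioc (0:ℝ) (π/2)) with hμdef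
  have hmeas : ∀ n, AEStronglyMeasurable (f n) μ :=
    fun n => (integrand_cont n).aestronglyMeasurable
  have hInt : ∀ n, IntegrableOn (f n) (Set.Ioc (0:ℝ) (π/2)) := fun n =>
    (integrand_cont n).integrableOn_Ioc
  have hval : ∀ n, ∫ θ in Set.Ioc (0:ℝ) (π/2), f n θ = cc n / (2*(n:ℝ)+1) := by
    intro n
    rw [a_eq n, intervalIntegral.integral_of_le hpi]
  have hfnonneg : ∀ n, ∀ θ ∈ Set.Ioc (0:ℝ) (π/2), 0 ≤ f n θ := by
    intro n θ hθ
    have hcos : 0 ≤ Real.cos θ :=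
      Real.cos_nonneg_of_mem_Icc ⟨by linarith [Real.pi_pos, hθ.1], hθ.2⟩
    have hsin : 0 ≤ Real.sin θ :=
      Real.sin_nonneg_of_nonneg_of_le_pi hθ.1.le (by linarith [Real.pi_pos, hθ.2])
    exact mul_nonneg (cc_nonneg n) (mul_nonneg (by positivity) hcos)
  have hnorm : ∀ n, ∫ θ in Set.Ioc (0:ℝ) (π/2), ‖f n θ‖ = cc n / (2*(n:ℝ)+1) := by
    intro n
    rw [← hval n]
    apply setIntegral_congr_fun measurableSet_Ioc
    intro θ hθ
    exact Real.norm_of_nonneg (hfnonneg n θ hθ)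
  have hlin : ∀ n, ∫⁻ θ, ‖f n θ‖ₑ ∂μ = ENNReal.ofReal (cc n / (2*(n:ℝ)+1)) := by
    intro n
    rw [← MeasureTheory.ofReal_integral_norm_eq_lintegral_enorm (hInt n), hnorm n]
  have hsum' : ∑' n, ∫⁻ θ, ‖f n θ‖ₑ ∂μ ≠ ⊤ := by
    simp_rw [hlin]
    rw [← ENNReal.ofReal_tsum_of_nonneg (fun n => div_nonneg (cc_nonneg n) (by positivity))
      summable_a]
    exact ENNReal.ofReal_ne_top
  have hswap := MeasureTheory.integral_tsum hmeas hsum'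
  have hleft : ∫ θ, (∑' n, f n θ) ∂μ = π/2 := by
    rw [hμdef, MeasureTheory.integral_Ioc_eq_integral_Ioo]
    have h1 : ∫ θ in Set.Ioo (0:ℝ) (π/2), (∑' n, f n θ) = ∫ _ in Set.Ioo (0:ℝ) (π/2), (1:ℝ) := by
      apply setIntegral_congr_fun measurableSet_Ioo
      intro θ hθ
      exact tsum_eq_one hθ.1 hθ.2
    rw [h1, setIntegral_const, Real.volume_real_Ioo_of_le hpi]
    rw [show π/2 - 0 = π/2 by ring]
    simp
  rw [← hleft, hswap]
  exact tsum_congr fun n => (hval n).symm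

theorem arcsin_series_at_one :
    Summable (fun n : ℕ => ((Nat.choose (2 * n) n : ℝ) / 4 ^ n) / (2 * n + 1)) ∧
    ∑' n : ℕ, ((Nat.choose (2 * n) n : ℝ) / 4 ^ n) / (2 * n + 1) = π / 2 :=
  ⟨summable_a, tsum_a⟩
end

section
/- The improper integral ∫₀¹ dx/√(1-x²) equals the sum of the termwise-integrated Maclaurin series: ∫₀¹ Σ_{n≥0} (C(2n,n)/4ⁿ) x^(2n) dx = Σ_{n≥0} (C(2n,n)/4ⁿ)/(2n+1). -/
open MeasureTheory Real

namespace ITS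

noncomputable def c (n : ℕ) : ℝ := (Nat.choose (2 * n) n : ℝ) / 4 ^ n

lemma c_zero : c 0 = 1 := by simp [c]

lemma c_nonneg (n : ℕ) : 0 ≤ c n :=
  div_nonneg (Nat.cast_nonneg _) (by positivity)

lemma c_rec (n : ℕ) : (2 * n + 2) * c (n + 1) = (2 * n + 1) * c n := by
  have h := Nat.succ_mul_centralBinom_succ n
  rw [Nat.centralBinom_eq_two_mul_choose, Nat.centralBinom_eq_two_mul_choose] at h
  have h' : ((n : ℝ) + 1) * ((2 * (n + 1)).choose (n + 1) : ℝ)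
      = 2 * (2 * (n : ℝ) + 1) * ((2 * n).choose n : ℝ) := by exact_mod_cast h
  simp only [c]
  have h4 : (4 : ℝ) ^ (n + 1) = 4 * 4 ^ n := by ring
  have h40 : (4 : ℝ) ^ n ≠ 0 := by positivity
  field_simp [h4]
  linear_combination (2 * (4:ℝ)^n) * h'

lemma c_le_one (n : ℕ) : c n ≤ 1 := by
  induction n with
  | zero => simp [c_zero]
  | succ n ih =>
    have h := c_rec n
    nlinarith [c_nonneg n, c_nonneg (n + 1)]

lemma c_sq (n : ℕ) : c n ^ 2 * (2 * n + 1) ≤ 1 := by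
  induction n with
  | zero => simp [c_zero]
  | succ n ih =>
    have h := c_rec n
    have e : ((2 * (n:ℝ) + 2) * c (n + 1)) ^ 2 = ((2 * (n:ℝ) + 1) * c n) ^ 2 := by rw [h]
    have hn : (0:ℝ) ≤ (n:ℝ) := Nat.cast_nonneg n
    push_cast
    nlinarith [sq_nonneg (c (n+1)), sq_nonneg (c n), c_nonneg n, c_nonneg (n+1)]

lemma summable_n_pow {r : ℝ} (h1 : |r| < 1) :
    Summable (fun n : ℕ => (n : ℝ) * r ^ (n - 1)) := by
  rw [← summable_nat_add_iff 1]
  have h : Summable (fun n : ℕ => (n : ℝ) ^ 1 * r ^ n) :=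
    summable_pow_mul_geometric_of_norm_lt_one 1 (by rwa [Real.norm_eq_abs])
  have h2 : Summable (fun n : ℕ => r ^ n) := summable_geometric_of_abs_lt_one h1
  simpa [add_mul, pow_one] using (h.add h2)

lemma abs_c_le (n : ℕ) : |c n| ≤ 1 := by
  rw [abs_of_nonneg (c_nonneg n)]; exact c_le_one n

lemma summable_c_pow {y : ℝ} (hy : |y| < 1) : Summable (fun n : ℕ => c n * y ^ n) := by
  apply Summable.of_norm
  apply Summable.of_nonneg_of_le (fun n => norm_nonneg _) (fun n => ?_)
    (summable_geometric_of_abs_lt_one hy).abs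
  rw [norm_mul, norm_pow]
  calc ‖c n‖ * ‖y‖ ^ n ≤ 1 * ‖y‖ ^ n := by
        apply mul_le_mul_of_nonneg_right (abs_c_le n) (by positivity)
    _ = |y ^ n| := by rw [one_mul, abs_pow, Real.norm_eq_abs]

lemma summable_c_deriv {y : ℝ} (hy : |y| < 1) :
    Summable (fun n : ℕ => c n * ((n : ℝ) * y ^ (n - 1))) := by
  apply Summable.of_norm
  apply Summable.of_nonneg_of_le (fun n => norm_nonneg _) (fun n => ?_) (summable_n_pow hy).abs
  rw [norm_mul, norm_mul]
  calc ‖c n‖ * (‖(n:ℝ)‖ * ‖y ^ (n-1)‖) ≤ 1 * (‖(n:ℝ)‖ * ‖y ^ (n-1)‖) := by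
        apply mul_le_mul_of_nonneg_right (abs_c_le n) (by positivity)
    _ = |(n:ℝ) * y ^ (n-1)| := by rw [one_mul, abs_mul, abs_pow]; simp [Real.norm_eq_abs]

lemma summable_c_n_pow {y : ℝ} (hy : |y| < 1) :
    Summable (fun n : ℕ => 2 * (n : ℝ) * c n * y ^ n) := by
  have h : Summable (fun n : ℕ => (n : ℝ) ^ 1 * y ^ n) :=
    summable_pow_mul_geometric_of_norm_lt_one 1 (by rwa [Real.norm_eq_abs])
  apply Summable.of_norm
  apply Summable.of_nonneg_of_le (fun n => norm_nonneg _) (fun n => ?_) ((h.mul_left 2).abs)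
  rw [norm_mul, norm_mul, norm_mul, norm_pow]
  have := abs_c_le n
  have h1 : ‖(2:ℝ)‖ * ‖(n:ℝ)‖ * ‖c n‖ * ‖y‖ ^ n ≤ ‖(2:ℝ)‖ * ‖(n:ℝ)‖ * 1 * ‖y‖ ^ n := by
    apply mul_le_mul_of_nonneg_right _ (by positivity)
    apply mul_le_mul_of_nonneg_left this (by positivity)
  refine h1.trans (le_of_eq ?_)
  rw [abs_mul, abs_mul, abs_pow]
  simp [Real.norm_eq_abs, abs_pow, pow_one]
  ring

noncomputable def f (y : ℝ) : ℝ := ∑' n : ℕ, c n * y ^ n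

lemma hasDerivAt_f {y : ℝ} (hy : |y| < 1) :
    HasDerivAt f (∑' n : ℕ, c n * ((n : ℝ) * y ^ (n - 1))) y := by
  set r : ℝ := (|y| + 1) / 2 with hr
  have hr0 : 0 ≤ r := by positivity
  have hyr : |y| < r := by rw [hr]; linarith
  have hr1 : |r| < 1 := by rw [abs_of_nonneg hr0]; rw [hr]; linarith [abs_nonneg y]
  have hmem : ∀ z : ℝ, z ∈ Metric.ball (0:ℝ) r ↔ |z| < r := by
    intro z; rw [Metric.mem_ball, Real.dist_eq, sub_zero]
  have hbound : ∀ (n : ℕ), ∀ z ∈ Metric.ball (0:ℝ) r,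
      ‖c n * ((n : ℝ) * z ^ (n - 1))‖ ≤ (n : ℝ) * r ^ (n - 1) := by
    intro n z hz
    rw [norm_mul, norm_mul, norm_pow]
    have hz' : |z| < r := (hmem z).1 hz
    have h1 : ‖z‖ ^ (n-1) ≤ r ^ (n-1) := pow_le_pow_left₀ (norm_nonneg z) hz'.le _
    calc ‖c n‖ * (‖(n:ℝ)‖ * ‖z‖ ^ (n-1)) ≤ 1 * (‖(n:ℝ)‖ * r ^ (n-1)) := by
          apply mul_le_mul (abs_c_le n) _ (by positivity) (by norm_num)
          exact mul_le_mul_of_nonneg_left h1 (norm_nonneg _)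
      _ = (n:ℝ) * r ^ (n-1) := by rw [one_mul]; simp
  exact hasDerivAt_tsum_of_isPreconnected (summable_n_pow hr1) Metric.isOpen_ball
    (convex_ball _ _).isPreconnected
    (fun n z _ => (hasDerivAt_pow n z).const_mul (c n)) hbound
    ((hmem 0).2 (by rw [abs_zero]; rw [hr]; linarith [abs_nonneg y]))
    (summable_c_pow (by norm_num : |(0:ℝ)| < 1)) ((hmem y).2 hyr)

lemma key_identity {z : ℝ} (hz : |z| < 1) :
    2 * (1 - z) * (∑' n : ℕ, c n * ((n : ℝ) * z ^ (n - 1))) = f z := by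
  have hs2 := summable_c_deriv hz
  set A : ℕ → ℝ := fun n => 2 * (c n * ((n : ℝ) * z ^ (n - 1))) with hAdef
  have hL : HasSum (fun n : ℕ => 2 * (1 - z) * (c n * ((n : ℝ) * z ^ (n - 1))))
      (2 * (1 - z) * ∑' n : ℕ, c n * ((n : ℝ) * z ^ (n - 1))) := hs2.hasSum.mul_left _
  have hT : HasSum (fun n : ℕ => c n * z ^ n) (f z) := (summable_c_pow hz).hasSum
  have hU : HasSum (fun n : ℕ => 2 * (n : ℝ) * c n * z ^ n)
      (∑' n : ℕ, 2 * (n : ℝ) * c n * z ^ n) := (summable_c_n_pow hz).hasSum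
  set U := ∑' n : ℕ, 2 * (n : ℝ) * c n * z ^ n with hUdef
  have hA1 : HasSum (fun n : ℕ => A (n + 1)) (f z + U) := by
    have he : (fun n : ℕ => A (n + 1))
        = fun n : ℕ => c n * z ^ n + 2 * (n : ℝ) * c n * z ^ n := by
      funext n
      have h := c_rec n
      simp only [hAdef, Nat.add_sub_cancel]
      push_cast
      linear_combination (z ^ n) * h
    rw [he]; exact hT.add hU
  have hA : HasSum A (f z + U) := by
    have := (hasSum_nat_add_iff (f := A) 1).mp hA1
    simpa [hAdef] using this
  have hfinal : HasSum (fun n : ℕ => A n - 2 * (n : ℝ) * c n * z ^ n) (f z) := by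
    simpa using hA.sub hU
  have heq : (fun n : ℕ => 2 * (1 - z) * (c n * ((n : ℝ) * z ^ (n - 1))))
      = fun n : ℕ => A n - 2 * (n : ℝ) * c n * z ^ n := by
    funext n
    simp only [hAdef]
    cases n with
    | zero => simp
    | succ m =>
      have hzz : z ^ m * z = z ^ (m + 1) := (pow_succ z m).symm
      simp only [Nat.add_sub_cancel]
      push_cast
      linear_combination (2 * ((m : ℝ) + 1) * c (m + 1)) * hzz
  rw [heq] at hL
  exact hL.unique hfinal

lemma f_eq {y : ℝ} (hy0 : 0 ≤ y) (hy1 : y < 1) : f y = 1 / Real.sqrt (1 - y) := by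
  have habs : ∀ z ∈ Set.Icc (0 : ℝ) y, |z| < 1 := fun z hz => by
    rw [abs_of_nonneg hz.1]; exact lt_of_le_of_lt hz.2 hy1
  set g : ℝ → ℝ := fun z => (f z) ^ 2 * (1 - z) with hg
  have hderiv : ∀ z ∈ Set.Icc (0 : ℝ) y, HasDerivAt g 0 z := by
    intro z hz
    have hz1 := habs z hz
    have hdf := hasDerivAt_f hz1
    have hkey := key_identity hz1
    set D := ∑' n : ℕ, c n * ((n : ℝ) * z ^ (n - 1)) with hD
    have h1 : HasDerivAt (fun w => (f w) ^ 2) (2 * f z * D) z := by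
      have := hdf.pow 2
      refine this.congr_deriv ?_
      push_cast
      ring
    have h2 : HasDerivAt (fun w : ℝ => (1 : ℝ) - w) (-1) z := by
      simpa using (hasDerivAt_id z).const_sub 1
    have h3 := h1.mul h2
    refine h3.congr_deriv ?_
    linear_combination (f z) * hkey
  have hcont : ContinuousOn g (Set.Icc 0 y) := fun z hz =>
    (hderiv z hz).continuousAt.continuousWithinAt
  have hconst := constant_of_has_deriv_right_zero hcont
    (fun z hz => (hderiv z (Set.mem_Icc_of_Ico hz)).hasDerivWithinAt)
  have hf0 : f 0 = 1 := by
    have : f 0 = c 0 * 0 ^ 0 := by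
      apply tsum_eq_single
      intro n hn
      rcases Nat.exists_eq_succ_of_ne_zero hn with ⟨m, rfl⟩
      simp
    simp [this, c_zero]
  have hgy : (f y) ^ 2 * (1 - y) = 1 := by
    have h := hconst y ⟨hy0, le_refl y⟩
    simp only [hg] at h
    rw [h, hf0]; norm_num
  have hfpos : (0 : ℝ) < f y := by
    have hsum : Summable (fun n : ℕ => c n * y ^ n) :=
      summable_c_pow (by rwa [abs_of_nonneg hy0])
    have hterm := Summable.le_tsum hsum 0 (fun n _ => mul_nonneg (c_nonneg n) (pow_nonneg hy0 n))
    simp only [c_zero, pow_zero, mul_one] at hterm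
    have : f y = ∑' n : ℕ, c n * y ^ n := rfl
    linarith [hterm]
  have h1y : (1 : ℝ) - y = (1 / f y) ^ 2 := by
    field_simp
    nlinarith [hgy]
  rw [show (1 : ℝ) - y = (1 / f y) ^ 2 from h1y, Real.sqrt_sq (by positivity)]
  field_simp

lemma summable_S : Summable (fun n : ℕ => c n / (2 * (n : ℝ) + 1)) := by
  have hb : Summable (fun n : ℕ => 1 / Real.sqrt ((n : ℝ) + 1) ^ 3) := by
    have h0 := (Real.summable_nat_rpow_inv (p := (3 : ℝ) / 2)).2 (by norm_num)
    have h1 : Summable (fun n : ℕ => ((((n : ℝ) + 1)) ^ ((3 : ℝ) / 2))⁻¹) := by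
      have := (summable_nat_add_iff (f := fun n : ℕ => (((n : ℝ)) ^ ((3 : ℝ) / 2))⁻¹) 1).2 h0
      simpa using this
    refine h1.congr fun n => ?_
    rw [Real.sqrt_eq_rpow, ← Real.rpow_natCast ((((n : ℝ) + 1)) ^ ((1 : ℝ) / 2)) 3,
      ← Real.rpow_mul (by positivity)]
    norm_num
  apply Summable.of_nonneg_of_le (fun n => div_nonneg (c_nonneg n) (by positivity)) _ hb
  intro n
  set s := Real.sqrt ((n : ℝ) + 1) with hsdef
  have hs0 : 0 < s := Real.sqrt_pos.2 (by positivity)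
  have hs2 : s ^ 2 = (n : ℝ) + 1 := Real.sq_sqrt (by positivity)
  have hc : c n ≤ 1 / s := by
    have h1 : c n ^ 2 ≤ 1 / ((n : ℝ) + 1) := by
      rw [le_div_iff₀ (by positivity : (0:ℝ) < (n:ℝ) + 1)]
      nlinarith [c_sq n, sq_nonneg (c n)]
    calc c n = Real.sqrt (c n ^ 2) := (Real.sqrt_sq (c_nonneg n)).symm
      _ ≤ Real.sqrt (1 / ((n : ℝ) + 1)) := Real.sqrt_le_sqrt h1
      _ = 1 / s := by rw [one_div, Real.sqrt_inv, ← one_div, hsdef]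
  calc c n / (2 * (n : ℝ) + 1) ≤ (1 / s) / s ^ 2 := by
        apply div_le_div₀ (by positivity) hc (by positivity)
        rw [hs2]; push_cast; linarith
    _ = 1 / s ^ 3 := by field_simp

lemma interval_int (n : ℕ) :
    ∫ x in (0:ℝ)..1, c n * x ^ (2 * n) = c n / (2 * (n : ℝ) + 1) := by
  rw [intervalIntegral.integral_const_mul, integral_pow]
  rw [one_pow, zero_pow (by positivity)]
  push_cast
  ring

lemma norm_int (n : ℕ) :
    ∫ x in Set.Ioc (0:ℝ) 1, ‖c n * x ^ (2 * n)‖ = c n / (2 * (n : ℝ) + 1) := by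
  rw [← interval_int n, intervalIntegral.integral_of_le zero_le_one]
  apply setIntegral_congr_fun measurableSet_Ioc
  intro x hx
  exact norm_of_nonneg (mul_nonneg (c_nonneg n) (pow_nonneg hx.1.le _))

lemma part2 : ∫ x in (0:ℝ)..1, (∑' n : ℕ, c n * x ^ (2 * n))
    = ∑' n : ℕ, c n / (2 * (n : ℝ) + 1) := by
  rw [intervalIntegral.integral_of_le zero_le_one]
  rw [← MeasureTheory.integral_tsum_of_summable_integral_norm
      (fun n => (Continuous.integrableOn_Ioc (by continuity)))
      (summable_S.congr fun n => (norm_int n).symm)]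
  exact tsum_congr fun n => by
    rw [← intervalIntegral.integral_of_le zero_le_one, interval_int]

lemma part1 : ∫ x in (0:ℝ)..1, 1 / Real.sqrt (1 - x ^ 2)
    = ∫ x in (0:ℝ)..1, (∑' n : ℕ, c n * x ^ (2 * n)) := by
  apply intervalIntegral.integral_congr_ae
  have hae : ∀ᵐ x : ℝ, x ≠ 1 := by
    rw [ae_iff]
    have : {x : ℝ | ¬x ≠ 1} = {1} := by ext x; simp
    rw [this, Real.volume_singleton]
  filter_upwards [hae] with x hx hmem
  rw [Set.uIoc_of_le zero_le_one] at hmem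
  have hx0 : 0 ≤ x := hmem.1.le
  have hx1 : x < 1 := lt_of_le_of_ne hmem.2 hx
  have hx2 : x ^ 2 < 1 := by nlinarith
  rw [← f_eq (by positivity) hx2]
  exact tsum_congr fun n => by rw [pow_mul]

end ITS

theorem integral_eq_termwise_sum :
    (∫ x in (0:ℝ)..1, 1 / Real.sqrt (1 - x ^ 2)
      = ∑' n : ℕ, ((Nat.choose (2 * n) n : ℝ) / 4 ^ n) / (2 * n + 1)) ∧
    (∫ x in (0:ℝ)..1, (∑' n : ℕ, ((Nat.choose (2 * n) n : ℝ) / 4 ^ n) * x ^ (2 * n))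
      = ∑' n : ℕ, ((Nat.choose (2 * n) n : ℝ) / 4 ^ n) / (2 * n + 1)) := by
  have h2 : ∫ x in (0:ℝ)..1, (∑' n : ℕ, ((Nat.choose (2 * n) n : ℝ) / 4 ^ n) * x ^ (2 * n))
      = ∑' n : ℕ, ((Nat.choose (2 * n) n : ℝ) / 4 ^ n) / (2 * n + 1) := ITS.part2
  refine ⟨?_, h2⟩
  rw [← h2]
  exact ITS.part1
end
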